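/- Let n ≥ 1, N = 2^n, and let α : Fin N → ℂ satisfy ∑_{j} |α j|² = 1 and α j ≠ 0 for all j. Let θ_j = Complex.arg (α j), so that α j = |α j| · exp(i θ_j). For 0 ≤ l ≤ r < N set S(l,r) = ∑_{j=l}^{r} |α j|². For 0 ≤ k < n and 0 ≤ x < 2^k set u = 2^{n−k} x, v = 2^{n−k} (x+1), w = (u+v)/2, γ(k,x) = S(u, w−1) / S(u, v−1), β(k,x) = θ_w − θ_u, and define the branch amplitudes a(k, x, 0) = √(γ(k,x)) and a(k, x, 1) = exp(i β(k,x)) · √(1 − γ(k,x)). For j ∈ [N] and 0 ≤ k < n, let bit(k,j) = ⌊j / 2^{n−1−k}⌋ mod 2 (the k-th most significant bit of j) and pre(k,j) = ⌊j / 2^{n−k}⌋ (the length-k binary prefix of j). Then for every j ∈ [N]: ∏_{k=0}^{n−1} a(k, pre(k,j), bit(k,j)) = exp(−i θ_0) · α j. Consequently, the recursive quantum state preparation program, whose single-qubit rotations U_{k,x} create the branch amplitudes a(k,x,0) and a(k,x,1) along the binary tree of quantum branches, prepares the state ∑_{j∈[N]} α_j |j⟩ up to the global phase exp(−i θ_0).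 -/

import Mathlib

/-- `S(l,r) = ∑_{j=l}^{r} |α j|²`, the squared mass of the amplitudes with indices in
the interval `[l, r]`. -/
noncomputable def qspS (N : ℕ) (α : Fin N → ℂ) (l r : ℕ) : ℝ :=
  ∑ j : Fin N, if l ≤ (j : ℕ) ∧ (j : ℕ) ≤ r then ‖α j‖ ^ 2 else 0

/-- `θ_j = arg (α j)` (and `0` for out-of-range indices). -/
noncomputable def qspTheta (N : ℕ) (α : Fin N → ℂ) (j : ℕ) : ℝ :=
  if h : j < N then Complex.arg (α ⟨j, h⟩) else 0

/-- `γ(k,x) = S(u, w−1) / S(u, v−1)` with `u = 2^{n−k} x`, `v = 2^{n−k} (x+1)` and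
`w = (u+v)/2`. -/
noncomputable def qspGamma (n N : ℕ) (α : Fin N → ℂ) (k x : ℕ) : ℝ :=
  qspS N α (2 ^ (n - k) * x) ((2 ^ (n - k) * x + 2 ^ (n - k) * (x + 1)) / 2 - 1) /
    qspS N α (2 ^ (n - k) * x) (2 ^ (n - k) * (x + 1) - 1)

/-- `β(k,x) = θ_w − θ_u` with `u = 2^{n−k} x`, `v = 2^{n−k} (x+1)` and `w = (u+v)/2`. -/
noncomputable def qspBeta (n N : ℕ) (α : Fin N → ℂ) (k x : ℕ) : ℝ :=
  qspTheta N α ((2 ^ (n - k) * x + 2 ^ (n - k) * (x + 1)) / 2) -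
    qspTheta N α (2 ^ (n - k) * x)

/-- The branch amplitudes produced by the single-qubit rotation `U_{k,x}`:
`a(k, x, 0) = √(γ(k,x))` and `a(k, x, 1) = exp(i β(k,x)) · √(1 − γ(k,x))`. -/
noncomputable def qspAmp (n N : ℕ) (α : Fin N → ℂ) (k x b : ℕ) : ℂ :=
  if b = 0 then ((Real.sqrt (qspGamma n N α k x) : ℝ) : ℂ)
  else Complex.exp (Complex.I * ((qspBeta n N α k x : ℝ) : ℂ)) *
    ((Real.sqrt (1 - qspGamma n N α k x) : ℝ) : ℂ)

/-- Auxiliary telescoping quantity: `f(k) = √S(u_k, u_k + 2^{n-k} - 1) · exp(i θ_{u_k})`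
where `u_k = 2^{n-k} ⌊j / 2^{n-k}⌋`. -/
noncomputable def qspF (n N : ℕ) (α : Fin N → ℂ) (j k : ℕ) : ℂ :=
  ((Real.sqrt (qspS N α (2 ^ (n - k) * (j / 2 ^ (n - k)))
      (2 ^ (n - k) * (j / 2 ^ (n - k)) + 2 ^ (n - k) - 1)) : ℝ) : ℂ) *
    Complex.exp (Complex.I * ((qspTheta N α (2 ^ (n - k) * (j / 2 ^ (n - k))) : ℝ) : ℂ))

lemma qspS_pos (N : ℕ) (α : Fin N → ℂ) (hne : ∀ j, α j ≠ 0) (l r : ℕ)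
    (hlr : l ≤ r) (hlN : l < N) : 0 < qspS N α l r := by
  unfold qspS
  apply Finset.sum_pos'
  · intro i _
    split_ifs
    · positivity
    · exact le_refl 0
  · refine ⟨⟨l, hlN⟩, Finset.mem_univ _, ?_⟩
    rw [if_pos ⟨le_refl l, hlr⟩]
    exact pow_pos (norm_pos_iff.mpr (hne _)) 2

lemma qspS_split (N : ℕ) (α : Fin N → ℂ) (l m r : ℕ) (h1 : l < m) (h2 : m ≤ r) :
    qspS N α l (m - 1) + qspS N α m r = qspS N α l r := by
  unfold qspS
  rw [← Finset.sum_add_distrib]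
  apply Finset.sum_congr rfl
  intro i _
  split_ifs <;> first | ring1 | (exfalso; omega)

/-- The key telescoping step. -/
lemma qspF_step (n : ℕ) (α : Fin (2 ^ n) → ℂ) (hne : ∀ j, α j ≠ 0) (j k : ℕ)
    (hj : j < 2 ^ n) (hk : k < n) :
    qspAmp n (2 ^ n) α k (j / 2 ^ (n - k)) (j / 2 ^ (n - 1 - k) % 2) *
      qspF n (2 ^ n) α j k = qspF n (2 ^ n) α j (k + 1) := by
  set p : ℕ := 2 ^ (n - (k + 1)) with hp
  have hp1 : 1 ≤ p := Nat.one_le_two_pow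
  have h2p : 2 ^ (n - k) = 2 * p := by
    rw [hp, ← pow_succ']
    congr 1
    omega
  have hm1 : n - 1 - k = n - (k + 1) := by omega
  set X : ℕ := j / (2 * p) with hX
  set u : ℕ := 2 * p * X with hu
  -- basic bounds
  have hdm : 2 * p * X + j % (2 * p) = j := Nat.div_add_mod j (2 * p)
  have hmlt : j % (2 * p) < 2 * p := Nat.mod_lt _ (by omega)
  have huj : u ≤ j := by omega
  have hju : j < u + 2 * p := by omega
  have hpow : 2 * p * 2 ^ k = 2 ^ n := by
    rw [← h2p, ← pow_add]
    congr 1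
    omega
  have hXlt : X < 2 ^ k := by
    rw [hX]
    apply Nat.div_lt_of_lt_mul
    omega
  have huN : u + 2 * p ≤ 2 ^ n := by
    calc u + 2 * p = 2 * p * (X + 1) := by ring
    _ ≤ 2 * p * 2 ^ k := Nat.mul_le_mul_left _ (by omega)
    _ = 2 ^ n := hpow
  -- bit relation
  have hbits : j / p = 2 * X + j / p % 2 := by
    conv_lhs => rw [← Nat.div_add_mod (j / p) 2]
    congr 1
    rw [Nat.div_div_eq_div_mul, mul_comm p 2]
  -- rewrite gamma and beta
  have hA : 0 < qspS (2 ^ n) α u (u + p - 1) :=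
    qspS_pos _ _ hne _ _ (by omega) (by omega)
  have hC : 0 < qspS (2 ^ n) α (u + p) (u + 2 * p - 1) :=
    qspS_pos _ _ hne _ _ (by omega) (by omega)
  have hB : 0 < qspS (2 ^ n) α u (u + 2 * p - 1) :=
    qspS_pos _ _ hne _ _ (by omega) (by omega)
  have hsplit : qspS (2 ^ n) α u (u + p - 1) + qspS (2 ^ n) α (u + p) (u + 2 * p - 1)
      = qspS (2 ^ n) α u (u + 2 * p - 1) := by
    have := qspS_split (2 ^ n) α u (u + p) (u + 2 * p - 1) (by omega) (by omega)
    simpa using this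
  have hxarg : j / 2 ^ (n - k) = X := by rw [h2p, hX]
  have hGamma : qspGamma n (2 ^ n) α k X
      = qspS (2 ^ n) α u (u + p - 1) / qspS (2 ^ n) α u (u + 2 * p - 1) := by
    unfold qspGamma
    rw [h2p, show 2 * p * (X + 1) = 2 * p * X + 2 * p from by ring, ← hu]
    congr 2 <;> omega
  have hBeta : qspBeta n (2 ^ n) α k X
      = qspTheta (2 ^ n) α (u + p) - qspTheta (2 ^ n) α u := by
    unfold qspBeta
    rw [h2p, show 2 * p * (X + 1) = 2 * p * X + 2 * p from by ring, ← hu]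
    congr 2
    omega
  have hBne : (Real.sqrt (qspS (2 ^ n) α u (u + 2 * p - 1)) : ℂ) ≠ 0 := by
    rw [Complex.ofReal_ne_zero]
    exact ne_of_gt (Real.sqrt_pos.2 hB)
  -- unfold the targets
  rw [hm1]
  have hfk : qspF n (2 ^ n) α j k
      = ((Real.sqrt (qspS (2 ^ n) α u (u + 2 * p - 1)) : ℝ) : ℂ) *
        Complex.exp (Complex.I * ((qspTheta (2 ^ n) α u : ℝ) : ℂ)) := by
    unfold qspF
    rw [h2p, ← hX, ← hu]
  rcases Nat.mod_two_eq_zero_or_one (j / p) with hb | hb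
  · -- left branch
    have hu' : p * (j / p) = u := by
      rw [hbits, hb]
      ring
    have hfk1 : qspF n (2 ^ n) α j (k + 1)
        = ((Real.sqrt (qspS (2 ^ n) α u (u + p - 1)) : ℝ) : ℂ) *
          Complex.exp (Complex.I * ((qspTheta (2 ^ n) α u : ℝ) : ℂ)) := by
      unfold qspF
      rw [← hp, hu']
    rw [hxarg, hb, hfk, hfk1]
    unfold qspAmp
    rw [if_pos rfl, hGamma, Real.sqrt_div hA.le, Complex.ofReal_div]
    field_simp
  · -- right branch
    have hu' : p * (j / p) = u + p := by
      rw [hbits, hb]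
      ring
    have hfk1 : qspF n (2 ^ n) α j (k + 1)
        = ((Real.sqrt (qspS (2 ^ n) α (u + p) (u + 2 * p - 1)) : ℝ) : ℂ) *
          Complex.exp (Complex.I * ((qspTheta (2 ^ n) α (u + p) : ℝ) : ℂ)) := by
      unfold qspF
      rw [← hp, hu', show u + p + p - 1 = u + 2 * p - 1 from by omega]
    rw [hxarg, hb, hfk, hfk1]
    unfold qspAmp
    rw [if_neg one_ne_zero, hGamma, hBeta]
    have h1g : 1 - qspS (2 ^ n) α u (u + p - 1) / qspS (2 ^ n) α u (u + 2 * p - 1)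
        = qspS (2 ^ n) α (u + p) (u + 2 * p - 1) / qspS (2 ^ n) α u (u + 2 * p - 1) := by
      field_simp
      linarith
    rw [h1g, Real.sqrt_div hC.le, Complex.ofReal_div]
    set sC : ℂ := ((Real.sqrt (qspS (2 ^ n) α (u + p) (u + 2 * p - 1)) : ℝ) : ℂ)
    set sB : ℂ := ((Real.sqrt (qspS (2 ^ n) α u (u + 2 * p - 1)) : ℝ) : ℂ)
    set tw : ℝ := qspTheta (2 ^ n) α (u + p)
    set tu : ℝ := qspTheta (2 ^ n) α u
    calc Complex.exp (Complex.I * ((tw - tu : ℝ) : ℂ)) * (sC / sB) *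
          (sB * Complex.exp (Complex.I * ((tu : ℝ) : ℂ)))
        = (sC / sB * sB) * (Complex.exp (Complex.I * ((tw - tu : ℝ) : ℂ)) *
            Complex.exp (Complex.I * ((tu : ℝ) : ℂ))) := by ring
      _ = sC * Complex.exp (Complex.I * ((tw : ℝ) : ℂ)) := by
          rw [div_mul_cancel₀ _ hBne, ← Complex.exp_add]
          congr 1
          push_cast
          ring

theorem qsp_correct (n : ℕ) (hn : 1 ≤ n) (N : ℕ) (hN : N = 2 ^ n) (α : Fin N → ℂ)
    (hnorm : ∑ j : Fin N, ‖α j‖ ^ 2 = 1) (hne : ∀ j, α j ≠ 0) :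
    ∀ j : Fin N,
      ∏ k ∈ Finset.range n,
          qspAmp n N α k ((j : ℕ) / 2 ^ (n - k)) ((j : ℕ) / 2 ^ (n - 1 - k) % 2)
        = Complex.exp (-Complex.I * ((qspTheta N α 0 : ℝ) : ℂ)) * α j := by
  subst hN
  intro j
  have hj : (j : ℕ) < 2 ^ n := j.isLt
  have main : ∀ t, t ≤ n →
      (∏ k ∈ Finset.range t,
        qspAmp n (2 ^ n) α k ((j : ℕ) / 2 ^ (n - k)) ((j : ℕ) / 2 ^ (n - 1 - k) % 2)) *
        qspF n (2 ^ n) α (j : ℕ) 0 = qspF n (2 ^ n) α (j : ℕ) t := by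
    intro t
    induction t with
    | zero => intro _; simp
    | succ t ih =>
      intro ht
      rw [Finset.prod_range_succ, mul_right_comm, ih (by omega), mul_comm]
      exact qspF_step n α hne (j : ℕ) t hj (by omega)
  have hmain := main n le_rfl
  -- compute f 0
  have hf0 : qspF n (2 ^ n) α (j : ℕ) 0
      = Complex.exp (Complex.I * ((qspTheta (2 ^ n) α 0 : ℝ) : ℂ)) := by
    unfold qspF
    have h1 : (j : ℕ) / 2 ^ (n - 0) = 0 := Nat.div_eq_of_lt (by simpa using hj)
    rw [h1, mul_zero]
    have hS1 : qspS (2 ^ n) α 0 (0 + 2 ^ (n - 0) - 1) = 1 := by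
      unfold qspS
      rw [← hnorm]
      apply Finset.sum_congr rfl
      intro i _
      rw [if_pos ⟨Nat.zero_le _, by have := i.isLt; simp at this ⊢; omega⟩]
    rw [hS1, Real.sqrt_one, Complex.ofReal_one, one_mul]
  -- compute f n
  have hfn : qspF n (2 ^ n) α (j : ℕ) n = α j := by
    unfold qspF
    have h1 : n - n = 0 := by omega
    rw [h1]
    simp only [pow_zero, one_mul, Nat.div_one]
    have hS : qspS (2 ^ n) α (j : ℕ) ((j : ℕ) + 1 - 1) = ‖α j‖ ^ 2 := by
      unfold qspS
      rw [Finset.sum_eq_single j]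
      · rw [if_pos ⟨le_refl _, by omega⟩]
      · intro i _ hij
        rw [if_neg]
        intro ⟨h1, h2⟩
        exact hij (Fin.ext (by omega))
      · intro h
        exact absurd (Finset.mem_univ j) h
    have hT : qspTheta (2 ^ n) α (j : ℕ) = Complex.arg (α j) := by
      unfold qspTheta
      rw [dif_pos hj]
    rw [hS, hT, Real.sqrt_sq (norm_nonneg _), mul_comm Complex.I]
    exact Complex.norm_mul_exp_arg_mul_I (α j)
  rw [hf0, hfn] at hmain
  rw [← hmain]
  rw [show Complex.exp (-Complex.I * ((qspTheta (2 ^ n) α 0 : ℝ) : ℂ)) *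
      ((∏ k ∈ Finset.range n,
        qspAmp n (2 ^ n) α k ((j : ℕ) / 2 ^ (n - k)) ((j : ℕ) / 2 ^ (n - 1 - k) % 2)) *
        Complex.exp (Complex.I * ((qspTheta (2 ^ n) α 0 : ℝ) : ℂ)))
      = (∏ k ∈ Finset.range n,
        qspAmp n (2 ^ n) α k ((j : ℕ) / 2 ^ (n - k)) ((j : ℕ) / 2 ^ (n - 1 - k) % 2)) *
        (Complex.exp (-Complex.I * ((qspTheta (2 ^ n) α 0 : ℝ) : ℂ)) *
         Complex.exp (Complex.I * ((qspTheta (2 ^ n) α 0 : ℝ) : ℂ))) from by ring]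
  rw [← Complex.exp_add]
  simp
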